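/- Let e₀, e₁, e₂, e₃ be the standard basis of ℝ⁴ with dual basis e⁰, e¹, e², e³, and for i ∈ {1,2,3} define the alternating 2-forms θ_i = e⁰ ∧ eⁱ + (1/2) Σ_{j,k} ε_{ijk} eʲ ∧ eᵏ. Then for all a, b ∈ {0,1,2,3}, (1/6) Σ_{i,j,k} ε_{ijk} (e_a ⌟ θ_i) ∧ (e_b ⌟ θ_j) ∧ θ_k = δ_{ab} · e⁰ ∧ e¹ ∧ e² ∧ e³. -/

import Mathlib

open scoped TensorProduct Matrix

/-- The wedge product of an alternating `m`-form and an alternating `n`-form on a real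
vector space `V`, as an alternating `(m+n)`-form. -/
noncomputable def wedge {V : Type*} [AddCommGroup V] [Module ℝ V] {m n : ℕ}
    (ω : V [⋀^Fin m]→ₗ[ℝ] ℝ) (η : V [⋀^Fin n]→ₗ[ℝ] ℝ) :
    V [⋀^Fin (m + n)]→ₗ[ℝ] ℝ :=
  ((TensorProduct.lid ℝ ℝ).toLinearMap.compAlternatingMap (ω.domCoprod η)).domDomCongr
    finSumFinEquiv

/-- The interior product `u ⌟ ω` of a vector `u` with an alternating 2-form `ω`:
the 1-form `v ↦ ω(u, v)`. -/
noncomputable def iprod {V : Type*} [AddCommGroup V] [Module ℝ V]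
    (u : V) (ω : V [⋀^Fin 2]→ₗ[ℝ] ℝ) : V [⋀^Fin 1]→ₗ[ℝ] ℝ :=
  ω.curryLeft u

/-- The Levi-Civita permutation symbol on `{1,2,3}` (indexed by `Fin 3`), as a real number:
`1` for even permutations of `(1,2,3)`, `-1` for odd permutations, and `0` otherwise. -/
noncomputable def levicivita (i j k : Fin 3) : ℝ :=
  (((i : ℝ) - (j : ℝ)) * ((j : ℝ) - (k : ℝ)) * ((k : ℝ) - (i : ℝ))) / 2

/-- `e^i`, the dual basis to the standard basis of `ℝ⁴`, as alternating 1-forms. -/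
noncomputable def E (i : Fin 4) : (Fin 4 → ℝ) [⋀^Fin 1]→ₗ[ℝ] ℝ :=
  AlternatingMap.ofSubsingleton ℝ (Fin 4 → ℝ) ℝ 0 (LinearMap.proj i)

/-- The standard basis vectors `e_a` of `ℝ⁴`. -/
noncomputable def e (a : Fin 4) : Fin 4 → ℝ := Pi.single a 1

/-- The standard 2-forms `θᵢ = e⁰ ∧ eⁱ + (1/2) Σ_{jk} ε_{ijk} eʲ ∧ eᵏ` on `ℝ⁴`,
for `i ∈ {1,2,3}`. -/
noncomputable def θ (i : Fin 3) : (Fin 4 → ℝ) [⋀^Fin 2]→ₗ[ℝ] ℝ :=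
  wedge (E 0) (E i.succ)
    + (1 / 2 : ℝ) • ∑ j : Fin 3, ∑ k : Fin 3, levicivita i j k • wedge (E j.succ) (E k.succ)

/-- The standard volume form `e⁰ ∧ e¹ ∧ e² ∧ e³` on `ℝ⁴`. -/
noncomputable def μ₀ : (Fin 4 → ℝ) [⋀^Fin 4]→ₗ[ℝ] ℝ :=
  wedge (wedge (wedge (E 0) (E 1)) (E 2)) (E 3)

section helpers

open Equiv

lemma E_apply (i : Fin 4) (v : Fin 1 → Fin 4 → ℝ) : E i v = v 0 i := rfl

lemma wedge_apply {V : Type*} [AddCommGroup V] [Module ℝ V] {m n : ℕ}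
    (ω : V [⋀^Fin m]→ₗ[ℝ] ℝ) (η : V [⋀^Fin n]→ₗ[ℝ] ℝ) (v : Fin (m + n) → V) :
    ((m.factorial * n.factorial : ℕ) : ℝ) * wedge ω η v
      = ∑ σ : Equiv.Perm (Fin m ⊕ Fin n), ((Equiv.Perm.sign σ : ℤ) : ℝ) *
          ((ω fun i => v (finSumFinEquiv (σ (Sum.inl i)))) *
           (η fun i => v (finSumFinEquiv (σ (Sum.inr i))))) := by
  set L : ℝ ⊗[ℝ] ℝ →ₗ[ℝ] ℝ := (TensorProduct.lid ℝ ℝ).toLinearMap with hL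
  have h := MultilinearMap.domCoprod_alternization_eq ω η
  have h2 := congrArg (fun F : V [⋀^(Fin m ⊕ Fin n)]→ₗ[ℝ] (ℝ ⊗[ℝ] ℝ) =>
      L (F (fun i => v (finSumFinEquiv i)))) h
  simp only [MultilinearMap.alternatization_apply, MultilinearMap.sum_apply,
    MultilinearMap.smul_apply, map_sum, LinearMap.map_smul_of_tower,
    MultilinearMap.domDomCongr_apply,
    MultilinearMap.domCoprod_apply, AlternatingMap.coe_multilinearMap,
    AlternatingMap.smul_apply, Fintype.card_fin] at h2
  have hw : wedge ω η v = L ((ω.domCoprod η) (fun i => v (finSumFinEquiv i))) := rfl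
  have hlid : ∀ x y : ℝ, L (x ⊗ₜ[ℝ] y) = x * y := by
    intro x y; simp [hL, TensorProduct.lid_tmul, smul_eq_mul]
  rw [hw, ← nsmul_eq_mul, ← h2]
  refine Finset.sum_congr rfl fun σ _ => ?_
  rw [hlid, Units.smul_def, zsmul_eq_mul]

lemma wedge_apply' {V : Type*} [AddCommGroup V] [Module ℝ V] {m n : ℕ}
    (ω : V [⋀^Fin m]→ₗ[ℝ] ℝ) (η : V [⋀^Fin n]→ₗ[ℝ] ℝ) (v : Fin (m + n) → V) :
    ((m.factorial * n.factorial : ℕ) : ℝ) * wedge ω η v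
      = ∑ τ : Equiv.Perm (Fin (m + n)), ((Equiv.Perm.sign τ : ℤ) : ℝ) *
          ((ω fun i => v (τ (Fin.castAdd n i))) *
           (η fun i => v (τ (Fin.natAdd m i)))) := by
  rw [wedge_apply]
  refine Fintype.sum_equiv (finSumFinEquiv.permCongr) _ _ (fun σ => ?_)
  simp only [Equiv.permCongr_apply, Equiv.Perm.sign_permCongr, Equiv.symm_apply_apply,
    ← finSumFinEquiv_apply_left (m := m), ← finSumFinEquiv_apply_right (m := m)]

lemma sum_perm_succ {M : Type*} [AddCommMonoid M] {n : ℕ} (f : Perm (Fin (n+1)) → M) :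
    ∑ σ : Perm (Fin (n+1)), f σ
      = ∑ p : Fin (n+1), ∑ σ : Perm (Fin n), f (Equiv.Perm.decomposeFin.symm (p, σ)) := by
  rw [Fintype.sum_equiv Equiv.Perm.decomposeFin f
    (fun q => f (Equiv.Perm.decomposeFin.symm q)) (fun σ => by simp)]
  exact Fintype.sum_prod_type (f := fun q => f (Equiv.Perm.decomposeFin.symm q))

lemma sum_perm_one {M : Type*} [AddCommMonoid M] (f : Perm (Fin 1) → M) :
    ∑ σ : Perm (Fin 1), f σ = f 1 :=
  Fintype.sum_subsingleton f 1

lemma wedge11 {V : Type*} [AddCommGroup V] [Module ℝ V]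
    (f g : V [⋀^Fin 1]→ₗ[ℝ] ℝ) (v : Fin 2 → V) :
    wedge f g v = f (fun _ => v 0) * g (fun _ => v 1) - f (fun _ => v 1) * g (fun _ => v 0) := by
  have h := wedge_apply' f g v
  norm_num at h
  rw [h, sum_perm_succ, Fin.sum_univ_succ, Fin.sum_univ_succ, Fin.sum_univ_zero,
    sum_perm_one, sum_perm_one]
  have h1 : (1 : Fin 2 × Perm (Fin 1)) = ((1 : Fin 2), (1 : Perm (Fin 1))) := rfl
  simp only [h1, Equiv.Perm.decomposeFin_symm_of_one, Equiv.swap_self, ← Perm.one_def]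
  norm_num [Fin.fin_one_eq_zero, show (Fin.castAdd 1 0 : Fin 2) = 0 from rfl,
    Equiv.swap_apply_left]
  ring


lemma alt_sum_apply {V : Type*} [AddCommGroup V] [Module ℝ V] {k : ℕ} {ι : Type*}
    (s : Finset ι) (f : ι → V [⋀^Fin k]→ₗ[ℝ] ℝ) (v : Fin k → V) :
    (∑ i ∈ s, f i) v = ∑ i ∈ s, f i v := by
  induction s using Finset.cons_induction with
  | empty => rfl
  | cons i s hi ih => rw [Finset.sum_cons, Finset.sum_cons, AlternatingMap.add_apply, ih]

lemma cons_val_three' {α : Type*} {m : ℕ} (x : α) (u : Fin (m+3) → α) :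
    Matrix.vecCons x u 3 = Matrix.vecHead (Matrix.vecTail (Matrix.vecTail u)) := rfl

lemma theta_apply (k : Fin 3) (v : Fin 2 → Fin 4 → ℝ) :
    θ k v = (v 0 0 * v 1 k.succ - v 1 0 * v 0 k.succ)
      + (1/2) * ∑ j : Fin 3, ∑ l : Fin 3,
          levicivita k j l * (v 0 j.succ * v 1 l.succ - v 1 j.succ * v 0 l.succ) := by
  simp only [θ, AlternatingMap.add_apply, AlternatingMap.smul_apply, alt_sum_apply,
    wedge11, E_apply, smul_eq_mul, Finset.mul_sum]

noncomputable def Tf : Fin 3 → Fin 4 → Fin 4 → ℝ :=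
  ![![![0,1,0,0], ![-1,0,0,0], ![0,0,0,1], ![0,0,-1,0]],
    ![![0,0,1,0], ![0,0,0,-1], ![-1,0,0,0], ![0,1,0,0]],
    ![![0,0,0,1], ![0,0,1,0], ![0,-1,0,0], ![-1,0,0,0]]]

set_option maxHeartbeats 2000000 in
lemma Tf_th (k : Fin 3) (c d : Fin 4) : θ k ![e c, e d] = Tf k c d := by
  rw [theta_apply]
  fin_cases k <;> fin_cases c <;> fin_cases d <;>
    simp [e, Tf, Fin.sum_univ_three, levicivita, Pi.single_apply, Matrix.cons_val] <;> norm_num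

lemma Tf_ip (i : Fin 3) (a c : Fin 4) : iprod (e a) (θ i) (fun _ => e c) = Tf i a c := by
  have h : iprod (e a) (θ i) (fun _ => e c) = θ i ![e a, e c] := by
    show θ i (Matrix.vecCons (e a) (fun _ => e c)) = _
    congr 1
    funext x
    refine Fin.cases rfl (fun j => by rw [Fin.fin_one_eq_zero j]; exact rfl) x
  rw [h, Tf_th]

lemma w3_apply (v : Fin 3 → Fin 4 → ℝ) :
    wedge (wedge (E 0) (E 1)) (E 2) v =
      v 0 0 * v 1 1 * v 2 2 - v 0 0 * v 2 1 * v 1 2 - v 1 0 * v 0 1 * v 2 2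
        + v 1 0 * v 2 1 * v 0 2 + v 2 0 * v 0 1 * v 1 2 - v 2 0 * v 1 1 * v 0 2 := by
  have h := wedge_apply' (wedge (E 0) (E 1)) (E 2) v
  norm_num [sum_perm_succ, sum_perm_one, Fin.sum_univ_succ, wedge11, E_apply,
    show (Fin.castAdd 1 (0:Fin 2) : Fin 3) = 0 from rfl,
    show (Fin.castAdd 1 (1:Fin 2) : Fin 3) = 1 from rfl,
    show (Fin.natAdd (1+1) (0:Fin 1) : Fin 3) = 2 from rfl,
    show ((2:Fin 3)) = Fin.succ 1 from rfl,
    Equiv.Perm.decomposeFin_symm_apply_zero, Equiv.Perm.decomposeFin_symm_apply_one,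
    show ∀ (p : Fin 3) (σe : Equiv.Perm (Fin 2)), Equiv.Perm.decomposeFin.symm (p, σe) 2
        = Equiv.swap 0 p ((σe 1).succ) from fun p σe => by
      rw [show (2 : Fin 3) = Fin.succ 1 from rfl, Equiv.Perm.decomposeFin_symm_apply_succ],
    Equiv.Perm.decomposeFin_symm_apply_succ, Equiv.swap_apply_def] at h
  simp (config := { decide := true }) at h
  ring_nf at h ⊢
  linarith

lemma sum_perm_two {M : Type*} [AddCommMonoid M] (f : Equiv.Perm (Fin 2) → M) :
    ∑ σ : Perm (Fin 2), f σ
      = ∑ p : Fin 2, ∑ σ : Perm (Fin 1), f (Equiv.Perm.decomposeFin.symm (p, σ)) :=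
  sum_perm_succ f

lemma sum_perm_three {M : Type*} [AddCommMonoid M] (f : Equiv.Perm (Fin 3) → M) :
    ∑ σ : Perm (Fin 3), f σ
      = ∑ p : Fin 3, ∑ σ : Perm (Fin 2), f (Equiv.Perm.decomposeFin.symm (p, σ)) :=
  sum_perm_succ f

lemma sum_perm_four {M : Type*} [AddCommMonoid M] (f : Equiv.Perm (Fin 4) → M) :
    ∑ σ : Perm (Fin 4), f σ
      = ∑ p : Fin 4, ∑ σ : Perm (Fin 3), f (Equiv.Perm.decomposeFin.symm (p, σ)) :=
  sum_perm_succ f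

lemma dF42 (p : Fin 4) (σ : Perm (Fin 3)) :
    Equiv.Perm.decomposeFin.symm (p, σ) 2 = Equiv.swap 0 p ((σ 1).succ) := by
  rw [show (2 : Fin 4) = Fin.succ 1 from rfl, Equiv.Perm.decomposeFin_symm_apply_succ]

lemma dF43 (p : Fin 4) (σ : Perm (Fin 3)) :
    Equiv.Perm.decomposeFin.symm (p, σ) 3 = Equiv.swap 0 p ((σ 2).succ) := by
  rw [show (3 : Fin 4) = Fin.succ 2 from rfl, Equiv.Perm.decomposeFin_symm_apply_succ]

lemma dF32 (p : Fin 3) (σ : Perm (Fin 2)) :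
    Equiv.Perm.decomposeFin.symm (p, σ) 2 = Equiv.swap 0 p ((σ 1).succ) := by
  rw [show (2 : Fin 3) = Fin.succ 1 from rfl, Equiv.Perm.decomposeFin_symm_apply_succ]

lemma mu_e : μ₀ e = 1 := by
  have h := wedge_apply' (wedge (wedge (E 0) (E 1)) (E 2)) (E 3) e
  rw [show wedge (wedge (wedge (E 0) (E 1)) (E 2)) (E 3) = μ₀ from rfl] at h
  norm_num [sum_perm_succ, sum_perm_one,
    Fin.sum_univ_succ, w3_apply, E_apply,
    show (Fin.castAdd 1 (0:Fin 3) : Fin 4) = 0 from rfl,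
    show (Fin.castAdd 1 (1:Fin 3) : Fin 4) = 1 from rfl,
    show (Fin.castAdd 1 (2:Fin 3) : Fin 4) = 2 from rfl,
    show (Fin.natAdd (1+1+1) (0:Fin 1) : Fin 4) = 3 from rfl,
    Equiv.Perm.decomposeFin_symm_apply_zero, Equiv.Perm.decomposeFin_symm_apply_one,
    dF42, dF43, dF32, Equiv.Perm.decomposeFin_symm_of_one,
    Equiv.Perm.decomposeFin.symm_sign,
    Equiv.swap_apply_def, e, Pi.single_apply] at h
  simp (config := { decide := true }) at h
  norm_num [Nat.factorial] at h
  linarith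

lemma wedge_1_1_2 {V : Type*} [AddCommGroup V] [Module ℝ V]
    (f g : V [⋀^Fin 1]→ₗ[ℝ] ℝ) (h2 : V [⋀^Fin 2]→ₗ[ℝ] ℝ) (v : Fin 4 → V) :
    wedge (wedge f g) h2 v = (1/4 : ℝ) * ∑ τ : Perm (Fin 4), ((Equiv.Perm.sign τ : ℤ) : ℝ) *
      ((f (fun _ => v (τ 0)) * g (fun _ => v (τ 1)) - f (fun _ => v (τ 1)) * g (fun _ => v (τ 0)))
        * h2 ![v (τ 2), v (τ 3)]) := by
  have h := wedge_apply' (wedge f g) h2 v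
  have hs : ∀ τ : Perm (Fin 4), (h2 fun i => v (τ (Fin.natAdd (1+1) i))) = h2 ![v (τ 2), v (τ 3)] := by
    intro τ
    congr 1
    funext i
    refine Fin.cases ?_ (fun j => ?_) i
    · exact rfl
    · rw [Fin.fin_one_eq_zero j]; exact rfl
  simp only [wedge11, hs,
    show (Fin.castAdd 2 (0:Fin 2) : Fin 4) = 0 from rfl,
    show (Fin.castAdd 2 (1:Fin 2) : Fin 4) = 1 from rfl] at h
  norm_num at h
  linarith

lemma ext4 {f g : (Fin 4 → ℝ) [⋀^Fin 4]→ₗ[ℝ] ℝ} (h : f e = g e) : f = g := by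
  refine Module.Basis.ext_alternating (Pi.basisFun ℝ (Fin 4)) (fun v hv => ?_)
  have hb : Function.Bijective v := Finite.injective_iff_bijective.mp hv
  have h1 : (fun i => (Pi.basisFun ℝ (Fin 4)) (v i)) = e ∘ (Equiv.ofBijective v hb) := by
    funext i
    simp [e, Equiv.ofBijective, Pi.basisFun_apply]
  rw [h1, AlternatingMap.map_perm, AlternatingMap.map_perm, h]

end helpers

set_option maxHeartbeats 4000000 in
/-- For the standard triple `(θ₁, θ₂, θ₃)` on `ℝ⁴` and standard basis vectors `e_a, e_b`:
`(1/6) Σ_{ijk} ε_{ijk} (e_a ⌟ θᵢ) ∧ (e_b ⌟ θⱼ) ∧ θₖ = δ_{ab} e⁰ ∧ e¹ ∧ e² ∧ e³`. -/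
theorem standard_triple_metric (a b : Fin 4) :
    (1 / 6 : ℝ) • ∑ i : Fin 3, ∑ j : Fin 3, ∑ k : Fin 3,
        levicivita i j k • wedge (wedge (iprod (e a) (θ i)) (iprod (e b) (θ j))) (θ k)
      = (if a = b then (1 : ℝ) else 0) • μ₀ := by
  apply ext4
  simp only [AlternatingMap.smul_apply, alt_sum_apply, smul_eq_mul, mu_e]
  simp only [Fin.sum_univ_three]
  norm_num [levicivita]
  simp only [AlternatingMap.neg_apply, wedge_1_1_2, Tf_ip, Tf_th]
  simp only [sum_perm_four, sum_perm_three, sum_perm_two, sum_perm_one,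
    Fin.sum_univ_succ, Fin.sum_univ_zero]
  simp only [Equiv.Perm.decomposeFin_symm_apply_zero, Equiv.Perm.decomposeFin_symm_apply_one,
    dF42, dF43, dF32, Equiv.Perm.decomposeFin_symm_of_one,
    Equiv.Perm.decomposeFin.symm_sign, Equiv.Perm.sign_one, Equiv.swap_apply_def]
  simp (config := { decide := true })
  fin_cases a <;> fin_cases b <;>
    simp [Tf, Matrix.cons_val] <;> norm_num
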